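/- For a continuous function f : [0,1] → ℝ and any δ > 0, N^ε_f = O(ε^{−V(f)−δ}) as ε → 0, where V(f) = inf{p ≥ 1 : ‖f‖_{p-var} < ∞}. -/

import Mathlib

open Set
open scoped ENNReal

/-- Number of bars of length `≥ ε` in the degree-0 persistence barcode of the
superlevel-set filtration of `f` on `[0,t]` (infinite bar capped at `[inf f, sup f]`):
the maximal number of points of `[0,t]`, each at height `≥ ε` above the global minimum,
such that between any two of them `f` dips at least `ε` below both. -/
noncomputable def barsCount (f : ℝ → ℝ) (t ε : ℝ) : ℕ :=
  sSup {k : ℕ | ∃ u : Fin k → ℝ,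
    (∀ i, u i ∈ Icc (0:ℝ) t) ∧
    (∀ i, sInf (f '' Icc (0:ℝ) t) + ε ≤ f (u i)) ∧
    (∀ i j : Fin k, i < j →
      u i < u j ∧ sInf (f '' Icc (u i) (u j)) ≤ min (f (u i)) (f (u j)) - ε)}

/-- The set of `p`-variation partition sums `Σ |f(t_k) - f(t_{k-1})|^p` of `f` over finite
partitions `0 = t_0 < t_1 < ... < t_m = 1` of `[0,1]`. -/
def pVarSums (f : ℝ → ℝ) (p : ℝ) : Set ℝ :=
  {S : ℝ | ∃ (m : ℕ) (u : ℕ → ℝ), u 0 = 0 ∧ u m = 1 ∧ (∀ i < m, u i < u (i + 1)) ∧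
    S = ∑ i ∈ Finset.range m, |f (u (i + 1)) - f (u i)| ^ p}

/-- `V(f) = inf {p ≥ 1 | ‖f‖_{p-var} < ∞}`, as an extended nonnegative real
(`⊤` if no `p ≥ 1` has finite `p`-variation). -/
noncomputable def varIndex (f : ℝ → ℝ) : ℝ≥0∞ :=
  sInf {q : ℝ≥0∞ | ∃ p : ℝ, q = ENNReal.ofReal p ∧ 1 ≤ p ∧ BddAbove (pVarSums f p)}

lemma key_bound (f : ℝ → ℝ) (hf : ContinuousOn f (Icc (0:ℝ) 1)) (p M ε : ℝ)
    (hp : 1 ≤ p) (hε : 0 < ε) (hM : ∀ S ∈ pVarSums f p, S ≤ M)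
    (k : ℕ) (hk3 : 3 ≤ k) (u : Fin k → ℝ)
    (hmem : ∀ i, u i ∈ Icc (0:ℝ) 1)
    (hsep : ∀ i j : Fin k, i < j →
      u i < u j ∧ sInf (f '' Icc (u i) (u j)) ≤ min (f (u i)) (f (u j)) - ε) :
    2 * ((k:ℝ) - 2) * ε ^ p ≤ M := by
  -- existence of dip points
  have hex : ∀ i : ℕ, ∀ h : i + 1 < k, ∃ v : ℝ,
      u ⟨i, by omega⟩ < v ∧ v < u ⟨i+1, h⟩ ∧
      f v ≤ f (u ⟨i, by omega⟩) - ε ∧ f v ≤ f (u ⟨i+1, h⟩) - ε := by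
    intro i h
    set a := u ⟨i, by omega⟩ with ha
    set b := u ⟨i+1, h⟩ with hb
    obtain ⟨hab, hinf⟩ := hsep ⟨i, by omega⟩ ⟨i+1, h⟩ (by simp [Fin.mk_lt_mk])
    have hsub : Icc a b ⊆ Icc (0:ℝ) 1 := by
      intro x hx
      have h1 := hmem ⟨i, by omega⟩
      have h2 := hmem ⟨i+1, h⟩
      exact ⟨le_trans h1.1 hx.1, le_trans hx.2 h2.2⟩
    obtain ⟨v, hv, hvmin⟩ := isCompact_Icc.exists_isMinOn ⟨a, left_mem_Icc.mpr hab.le⟩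
      (hf.mono hsub)
    have hvinf : f v ≤ sInf (f '' Icc a b) := by
      apply le_csInf (Nonempty.image _ ⟨a, left_mem_Icc.mpr hab.le⟩)
      rintro y ⟨x, hx, rfl⟩
      exact hvmin hx
    have h1 : f v ≤ f a - ε := le_trans (le_trans hvinf hinf) (by simp [min_le_left, ha])
    have h2 : f v ≤ f b - ε := le_trans (le_trans hvinf hinf) (by simp [min_le_right, hb])
    refine ⟨v, ?_, ?_, h1, h2⟩
    · rcases lt_or_eq_of_le hv.1 with h' | h'
      · exact h'
      · exfalso; rw [← h'] at h1; linarith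
    · rcases lt_or_eq_of_le hv.2 with h' | h'
      · exact h'
      · exfalso; rw [h'] at h2; linarith
  classical
  set U : ℕ → ℝ := fun i => if h : i < k then u ⟨i, h⟩ else 0 with hU
  set V : ℕ → ℝ := fun i => if h : i + 1 < k then (hex i h).choose else 0 with hVdef
  have hUV : ∀ i : ℕ, i + 1 < k →
      U i < V i ∧ V i < U (i+1) ∧ f (V i) ≤ f (U i) - ε ∧ f (V i) ≤ f (U (i+1)) - ε := by
    intro i h
    have := (hex i h).choose_spec
    simp only [hU, hVdef, dif_pos h, dif_pos (by omega : i < k), dif_pos (by omega : i + 1 < k)]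
    exact this
  have hU01 : ∀ i : ℕ, i < k → U i ∈ Icc (0:ℝ) 1 := by
    intro i h
    simp only [hU, dif_pos h]
    exact hmem _
  set m : ℕ := 2 * k - 2 with hm
  set w : ℕ → ℝ := fun j => if j = 0 then 0 else if m ≤ j then 1
      else if Even j then U (j/2) else V (j/2) with hw
  have hw0 : w 0 = 0 := by simp [hw]
  have hwm : w m = 1 := by simp [hw]; omega
  have hwint : ∀ j, 1 ≤ j → j < m → w j = if Even j then U (j/2) else V (j/2) := by
    intro j h1 h2
    simp only [hw]
    rw [if_neg (by omega), if_neg (by omega)]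
  -- monotonicity
  have hmono : ∀ i < m, w i < w (i + 1) := by
    intro i hi
    rcases Nat.eq_zero_or_pos i with rfl | hipos
    · rw [hw0, hwint 1 le_rfl (by omega)]
      have h01 := hUV 0 (by omega)
      have := (hU01 0 (by omega)).1
      simp only [Nat.not_even_one, if_false]
      calc (0:ℝ) ≤ U 0 := this
        _ < V 0 := h01.1
        _ = V (1/2) := by norm_num
    · rcases eq_or_lt_of_le (by omega : i + 1 ≤ m) with he | hlt
      · -- i = m - 1 = 2k - 3, odd
        rw [hwint i (by omega) hi, he, hwm]
        have hodd : ¬ Even i := by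
          intro hev
          obtain ⟨r, hr⟩ := hev
          omega
        rw [if_neg hodd]
        have hi2 : i / 2 + 1 < k := by omega
        have h1 := (hUV (i/2) hi2).2.1
        have h2 := (hU01 (i/2 + 1) (by omega)).2
        calc V (i/2) < U (i/2 + 1) := h1
          _ ≤ 1 := h2
      · rw [hwint i (by omega) hi, hwint (i+1) (by omega) hlt]
        by_cases hev : Even i
        · rw [if_pos hev, if_neg (fun h => (Nat.even_add_one.mp h) hev)]
          obtain ⟨r, hr⟩ := hev
          have hdiv : (i+1)/2 = i/2 := by omega
          rw [hdiv]
          have : i / 2 + 1 < k := by omega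
          exact (hUV (i/2) this).1
        · rw [if_neg hev, if_pos (Nat.even_add_one.mpr hev)]
          have hdiv : (i+1)/2 = i/2 + 1 := by
            rcases Nat.even_or_odd i with h | h
            · exact absurd h hev
            · obtain ⟨r, hr⟩ := h; omega
          rw [hdiv]
          have : i / 2 + 1 < k := by omega
          exact (hUV (i/2) this).2.1
  -- the sum is a p-variation sum
  have hSmem : (∑ i ∈ Finset.range m, |f (w (i + 1)) - f (w i)| ^ p) ∈ pVarSums f p :=
    ⟨m, w, hw0, hwm, hmono, rfl⟩
  have hSM := hM _ hSmem
  -- lower bound on the sum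
  have hterm : ∀ j ∈ Finset.Ico 1 (m - 1), ε ^ p ≤ |f (w (j + 1)) - f (w j)| ^ p := by
    intro j hj
    rw [Finset.mem_Ico] at hj
    have hj1 : 1 ≤ j := hj.1
    have hj2 : j < m - 1 := hj.2
    have habs : ε ≤ |f (w (j + 1)) - f (w j)| := by
      rw [hwint j hj1 (by omega), hwint (j+1) (by omega) (by omega)]
      by_cases hev : Even j
      · rw [if_pos hev, if_neg (fun h => (Nat.even_add_one.mp h) hev)]
        obtain ⟨r, hr⟩ := hev
        have hdiv : (j+1)/2 = j/2 := by omega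
        rw [hdiv]
        have hk' : j / 2 + 1 < k := by omega
        have := (hUV (j/2) hk').2.2.1
        rw [abs_sub_comm, abs_of_nonneg (by linarith)]
        linarith
      · rw [if_neg hev, if_pos (Nat.even_add_one.mpr hev)]
        have hdiv : (j+1)/2 = j/2 + 1 := by
          rcases Nat.even_or_odd j with h | h
          · exact absurd h hev
          · obtain ⟨r, hr⟩ := h; omega
        rw [hdiv]
        have hk' : j / 2 + 1 < k := by
          rcases Nat.even_or_odd j with h | h
          · exact absurd h hev
          · obtain ⟨r, hr⟩ := h; omega
        have := (hUV (j/2) hk').2.2.2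
        rw [abs_of_nonneg (by linarith)]
        linarith
    exact Real.rpow_le_rpow hε.le habs (by linarith)
  have hsum1 : ∑ j ∈ Finset.Ico 1 (m-1), (ε:ℝ) ^ p
      ≤ ∑ j ∈ Finset.Ico 1 (m-1), |f (w (j + 1)) - f (w j)| ^ p :=
    Finset.sum_le_sum hterm
  have hsub : Finset.Ico 1 (m-1) ⊆ Finset.range m := by
    intro x hx
    rw [Finset.mem_Ico] at hx
    rw [Finset.mem_range]
    omega
  have hsum2 : ∑ j ∈ Finset.Ico 1 (m-1), |f (w (j + 1)) - f (w j)| ^ p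
      ≤ ∑ j ∈ Finset.range m, |f (w (j + 1)) - f (w j)| ^ p := by
    apply Finset.sum_le_sum_of_subset_of_nonneg hsub
    intro i _ _
    exact Real.rpow_nonneg (abs_nonneg _) p
  have hcard : ∑ j ∈ Finset.Ico 1 (m-1), (ε:ℝ) ^ p = ((m - 2 : ℕ) : ℝ) * ε ^ p := by
    have h12 : m - 1 - 1 = m - 2 := by omega
    rw [Finset.sum_const, Nat.card_Ico, h12, nsmul_eq_mul]
  have hcast : ((m - 2 : ℕ) : ℝ) = 2 * ((k:ℝ) - 2) := by
    have : m - 2 = 2 * (k - 2) := by omega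
    rw [this]
    push_cast [Nat.cast_sub (by omega : 2 ≤ k)]
    ring
  calc 2 * ((k:ℝ) - 2) * ε ^ p = ((m - 2 : ℕ) : ℝ) * ε ^ p := by rw [hcast]
    _ = ∑ j ∈ Finset.Ico 1 (m-1), (ε:ℝ) ^ p := hcard.symm
    _ ≤ _ := le_trans hsum1 hsum2
    _ ≤ M := hSM
theorem barsCount_isBigO_varIndex (f : ℝ → ℝ) (hf : ContinuousOn f (Icc (0:ℝ) 1))
    (hV : varIndex f ≠ ⊤) :
    ∀ δ > (0:ℝ), ∃ C > (0:ℝ), ∃ ε₀ > (0:ℝ), ∀ ε : ℝ, 0 < ε → ε < ε₀ →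
      (barsCount f 1 ε : ℝ) ≤ C * ε ^ (-((varIndex f).toReal + δ)) := by
  intro δ hδ
  have h1 : varIndex f < varIndex f + ENNReal.ofReal δ :=
    ENNReal.lt_add_right hV (by simp [ENNReal.ofReal_eq_zero]; linarith)
  rw [varIndex] at h1
  obtain ⟨q, hqS, hqlt⟩ := sInf_lt_iff.mp h1
  obtain ⟨p, rfl, hp1, hbdd⟩ := hqS
  obtain ⟨M, hMub⟩ := hbdd
  have hM : ∀ S ∈ pVarSums f p, S ≤ M := fun S hS => hMub hS
  have hVt : (0:ℝ) ≤ (varIndex f).toReal := ENNReal.toReal_nonneg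
  have hpVδ : p < (varIndex f).toReal + δ := by
    have heq : varIndex f + ENNReal.ofReal δ
        = ENNReal.ofReal ((varIndex f).toReal + δ) := by
      rw [ENNReal.ofReal_add hVt hδ.le, ENNReal.ofReal_toReal hV]
    have hlt : ENNReal.ofReal p < ENNReal.ofReal ((varIndex f).toReal + δ) := by
      rw [← heq]; exact hqlt
    exact (ENNReal.ofReal_lt_ofReal_iff (by linarith)).mp hlt
  -- M ≥ 0
  have hM0 : (0:ℝ) ≤ M := by
    have hmem : |f 1 - f 0| ^ p ∈ pVarSums f p := by
      refine ⟨1, fun n => (n:ℝ), by norm_num, by norm_num, ?_, ?_⟩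
      · intro i hi
        simp only []
        exact_mod_cast Nat.lt_succ_self i
      · rw [Finset.sum_range_one]; norm_num
    exact le_trans (Real.rpow_nonneg (abs_nonneg _) p) (hM _ hmem)
  refine ⟨M / 2 + 2, by linarith, 1, one_pos, ?_⟩
  intro ε hε hε1
  have hεp : (0:ℝ) < ε ^ p := Real.rpow_pos_of_pos hε p
  set x : ℝ := M / 2 * ε ^ (-p) with hx
  have hεinv : ε ^ (-p) = (ε ^ p)⁻¹ := Real.rpow_neg hε.le p
  have hx0 : 0 ≤ x := by
    rw [hx, hεinv]; positivity
  set n₀ : ℕ := ⌊x⌋₊ + 2 with hn₀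
  have hbc : barsCount f 1 ε ≤ n₀ := by
    apply csSup_le
    · exact ⟨0, Fin.elim0, fun i => i.elim0, fun i => i.elim0, fun i => i.elim0⟩
    · rintro k ⟨u, hmem', _, hsep⟩
      rcases le_or_gt k 2 with hk2 | hk3
      · omega
      · have H := key_bound f hf p M ε hp1 hε hM k hk3 u hmem' hsep
        have hkx : ((k - 2 : ℕ) : ℝ) ≤ x := by
          have hc : ((k - 2 : ℕ) : ℝ) = (k:ℝ) - 2 := by
            push_cast [Nat.cast_sub (by omega : 2 ≤ k)]; ring
          rw [hc, hx, hεinv, show M / 2 * (ε ^ p)⁻¹ = M / (2 * ε ^ p) by ring,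
            le_div_iff₀ (by positivity)]
          nlinarith
        have := Nat.le_floor hkx
        omega
  -- final chain
  have h1' : (barsCount f 1 ε : ℝ) ≤ (n₀ : ℝ) := by exact_mod_cast hbc
  have h2' : (n₀ : ℝ) ≤ x + 2 := by
    rw [hn₀]
    push_cast
    have := Nat.floor_le hx0
    linarith
  have hone : (1:ℝ) ≤ ε ^ (-p) := by
    have := Real.rpow_le_rpow_of_exponent_ge hε hε1.le (by linarith : -p ≤ 0)
    rwa [Real.rpow_zero] at this
  have hexp : ε ^ (-p) ≤ ε ^ (-(((varIndex f)).toReal + δ)) :=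
    Real.rpow_le_rpow_of_exponent_ge hε hε1.le (by linarith)
  have hrpos : (0:ℝ) < ε ^ (-(((varIndex f)).toReal + δ)) := Real.rpow_pos_of_pos hε _
  calc (barsCount f 1 ε : ℝ) ≤ x + 2 := le_trans h1' h2'
    _ ≤ M / 2 * ε ^ (-p) + 2 * ε ^ (-p) := by rw [hx]; nlinarith
    _ = (M / 2 + 2) * ε ^ (-p) := by ring
    _ ≤ (M / 2 + 2) * ε ^ (-(((varIndex f)).toReal + δ)) := by nlinarith
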